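/- Let v solve the Goursat integral equation v = v₀ + Vv. Then for each fixed ξ, v(ξ,·) is absolutely continuous in η and v_η(ξ,η) = −(1/4) q(η/2) − (1/4)∫₀^ξ q((η−ξ₁)/2) v(ξ₁,η) dξ₁ for a.e. η ∈ [ξ,T]. -/

import Mathlib

open MeasureTheory Set Metric Filter Topology
set_option maxHeartbeats 1000000
set_option synthInstance.maxHeartbeats 400000

abbrev MatC (n : ℕ) := EuclideanSpace ℂ (Fin n) →L[ℂ] EuclideanSpace ℂ (Fin n)

noncomputable def v0fun (n : ℕ) (q : ℝ → MatC n) (ξ η : ℝ) : MatC n :=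
  -((1 / 2 : ℂ) • ∫ s in (ξ / 2)..(η / 2), q s)

noncomputable def Vop (n : ℕ) (q : ℝ → MatC n) (v : ℝ → ℝ → MatC n) :
    ℝ → ℝ → MatC n :=
  fun ξ η => -((1 / 4 : ℂ) • ∫ ξ₁ in (0:ℝ)..ξ, ∫ η₁ in ξ..η, q ((η₁ - ξ₁) / 2) * v ξ₁ η₁)

/-- The claimed a.e. `η`-derivative of `v(ξ,·)`. -/
noncomputable def vEta (n : ℕ) (q : ℝ → MatC n) (v : ℝ → ℝ → MatC n) (ξ η : ℝ) : MatC n :=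
  -((1 / 4 : ℂ) • q (η / 2))
    - (1 / 4 : ℂ) • (∫ ξ₁ in (0:ℝ)..ξ, q ((η - ξ₁) / 2) * v ξ₁ η)

lemma null_pre (A : Set ℝ) (hA : volume A = 0) :
    (volume : Measure (ℝ × ℝ)) ((fun p : ℝ × ℝ => (p.2 - p.1) / 2) ⁻¹' A) = 0 := by
  obtain ⟨B, hAB, hBm, hB0⟩ := exists_measurable_superset_of_null hA
  refine measure_mono_null (preimage_mono hAB) ?_
  have hm : Measurable fun p : ℝ × ℝ => (p.2 - p.1) / 2 :=
    (measurable_snd.sub measurable_fst).div_const 2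
  rw [Measure.volume_eq_prod, Measure.prod_apply (hm hBm)]
  have hslice : ∀ x : ℝ, volume (Prod.mk x ⁻¹' ((fun p : ℝ × ℝ => (p.2 - p.1) / 2) ⁻¹' B)) = 0 := by
    intro x
    have h1 : (Prod.mk x ⁻¹' ((fun p : ℝ × ℝ => (p.2 - p.1) / 2) ⁻¹' B))
        = (fun y : ℝ => y + (-x)) ⁻¹' ((fun z : ℝ => 2⁻¹ * z) ⁻¹' B) := by
      ext y; simp [div_eq_inv_mul, sub_eq_add_neg]
    rw [h1, measure_preimage_add_right]
    have := Measure.map_apply (measurable_const_mul (2⁻¹ : ℝ)) hBm (μ := volume)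
    rw [← this, Real.map_volume_mul_left (by norm_num : (2⁻¹ : ℝ) ≠ 0), Measure.smul_apply,
      hB0]
    simp
  simp [hslice]


lemma ae_hasDerivWithinAt_intervalIntegral {E : Type*} [NormedAddCommGroup E]
    [NormedSpace ℝ E] [CompleteSpace E] (g : ℝ → E) (a b : ℝ)
    (hg : IntegrableOn g (Icc a b)) :
    ∀ᵐ x ∂(volume.restrict (Icc a b)),
      HasDerivWithinAt (fun u => ∫ s in a..u, g s) (g x) (Icc a b) x := by
  set g₀ : ℝ → E := (Icc a b).indicator g with hg₀def
  have hg₀ : Integrable g₀ := (integrable_indicator_iff measurableSet_Icc).2 hg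
  have H := IsUnifLocDoublingMeasure.ae_tendsto_average_norm_sub
    (μ := (volume : Measure ℝ)) hg₀.locallyIntegrable 1
  filter_upwards [ae_restrict_of_ae H, ae_restrict_mem measurableSet_Icc] with x hx hxmem
  rw [hasDerivWithinAt_iff_tendsto_slope]
  set l := 𝓝[Icc a b \ {x}] x with hl
  have hδ : Tendsto (fun u : ℝ => |u - x| / 2) l (𝓝[>] (0:ℝ)) := by
    rw [tendsto_nhdsWithin_iff]
    constructor
    · have : Tendsto (fun u : ℝ => |u - x| / 2) (𝓝 x) (𝓝 (|x - x| / 2)) :=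
        (((continuous_id.sub continuous_const).abs.div_const 2).tendsto x)
      simpa using this.mono_left nhdsWithin_le_nhds
    · filter_upwards [self_mem_nhdsWithin] with u hu
      have h1 : u ≠ x := hu.2
      have h2 : |u - x| > 0 := abs_pos.2 (sub_ne_zero.2 h1)
      show (0:ℝ) < |u - x| / 2
      linarith
  have hmem : ∀ᶠ u in l, x ∈ closedBall ((x + u) / 2) (1 * (|u - x| / 2)) := by
    refine Eventually.of_forall fun u => ?_
    simp only [mem_closedBall, Real.dist_eq, one_mul]
    rw [show x - (x + u) / 2 = (x - u) / 2 by ring, abs_div, abs_sub_comm]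
    simp [abs_of_nonneg, le_refl]
  have havg := hx (fun u : ℝ => (x + u) / 2) (fun u : ℝ => |u - x| / 2) hδ hmem
  have hgx : g x = g₀ x := (indicator_of_mem hxmem g).symm
  rw [hgx, tendsto_iff_norm_sub_tendsto_zero]
  refine squeeze_zero' (Eventually.of_forall fun u => norm_nonneg _) ?_ havg
  filter_upwards [self_mem_nhdsWithin] with u hu
  obtain ⟨humem, hune⟩ := hu
  have hune' : u ≠ x := hune
  -- interval integrability
  have hsub : ∀ c d : ℝ, c ∈ Icc a b → d ∈ Icc a b → IntervalIntegrable g volume c d := by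
    intro c d hc hd
    rw [intervalIntegrable_iff]
    exact hg.mono_set ((Set.uIoc_subset_uIcc).trans (uIcc_subset_Icc hc hd))
  have hab : a ≤ b := hxmem.1.trans hxmem.2
  have II_au : IntervalIntegrable g volume a u := hsub a u ⟨le_rfl, hab⟩ humem
  have II_ax : IntervalIntegrable g volume a x := hsub a x ⟨le_rfl, hab⟩ hxmem
  have hFd : (∫ s in a..u, g s) - ∫ s in a..x, g s = ∫ s in x..u, g s :=
    intervalIntegral.integral_interval_sub_left II_au II_ax
  have hcongr : (∫ s in x..u, g s) = ∫ s in x..u, g₀ s :=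
    intervalIntegral.integral_congr fun y hy =>
      (indicator_of_mem (uIcc_subset_Icc hxmem humem hy) g).symm
  set r : ℝ := |u - x| / 2 with hr
  set w : ℝ := (x + u) / 2 with hw
  have hballIcc : closedBall w r = uIcc x u := by
    rw [Real.closedBall_eq_Icc, hr, hw]
    rcases le_total x u with h | h
    · rw [uIcc_of_le h, abs_of_nonneg (by linarith : (0:ℝ) ≤ u - x)]
      congr 1 <;> ring
    · rw [uIcc_of_ge h, abs_of_nonpos (by linarith : u - x ≤ 0)]
      congr 1 <;> ring
  have hne : u - x ≠ 0 := sub_ne_zero.2 hune'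
  have hint : IntervalIntegrable g₀ volume x u := by
    rw [intervalIntegrable_iff]; exact hg₀.integrableOn
  have hslope : slope (fun u => ∫ s in a..u, g s) x u - g₀ x
      = (u - x)⁻¹ • ∫ s in x..u, (g₀ s - g₀ x) := by
    rw [intervalIntegral.integral_sub hint (intervalIntegrable_const),
      intervalIntegral.integral_const, slope_def_module, hFd, hcongr, smul_sub, smul_smul,
      inv_mul_cancel₀ hne, one_smul]
  rw [hslope]
  have hI : IntegrableOn (fun s => ‖g₀ s - g₀ x‖) (closedBall w r) :=
    (hg₀.integrableOn.sub (integrableOn_const measure_closedBall_lt_top.ne)).norm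
  calc ‖(u - x)⁻¹ • ∫ s in x..u, (g₀ s - g₀ x)‖
      = |u - x|⁻¹ * ‖∫ s in x..u, (g₀ s - g₀ x)‖ := by
        rw [norm_smul, Real.norm_eq_abs, abs_inv]
    _ ≤ |u - x|⁻¹ * ∫ s in Set.uIoc x u, ‖g₀ s - g₀ x‖ :=
        mul_le_mul_of_nonneg_left intervalIntegral.norm_integral_le_integral_norm_uIoc
          (by positivity)
    _ ≤ |u - x|⁻¹ * ∫ s in closedBall w r, ‖g₀ s - g₀ x‖ := by
        refine mul_le_mul_of_nonneg_left ?_ (by positivity)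
        refine setIntegral_mono_set hI (Eventually.of_forall fun s => norm_nonneg _) ?_
        exact HasSubset.Subset.eventuallyLE (hballIcc ▸ uIoc_subset_uIcc)
    _ = ⨍ y in closedBall w r, ‖g₀ y - g₀ x‖ := by
        rw [setAverage_eq, Real.volume_real_closedBall (by positivity),
          smul_eq_mul]
        congr 1
        rw [hr]
        have : |u - x| ≠ 0 := fun h => hne (abs_eq_zero.1 h)
        field_simp

/-- For the continuous solution `v` of the Goursat integral equation
`v = v₀ + Vv`, for each fixed `ξ` the map `η ↦ v(ξ,η)` is absolutely continuous
(it is the indefinite integral of an integrable function) and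
`v_η(ξ,η) = −(1/4)q(η/2) − (1/4)∫₀^ξ q((η−ξ₁)/2) v(ξ₁,η) dξ₁` for a.e. `η ∈ [ξ,T]`. -/
theorem stmt9 (n : ℕ) (q : ℝ → MatC n)
    (hq : LocallyIntegrableOn q (Ici (0 : ℝ))) (T : ℝ) (hT : 0 < T)
    (v : ℝ → ℝ → MatC n)
    (hcont : ContinuousOn (fun p : ℝ × ℝ => v p.1 p.2)
        {p : ℝ × ℝ | 0 ≤ p.1 ∧ p.1 ≤ p.2 ∧ p.2 ≤ T})
    (heq : ∀ ξ η : ℝ, 0 ≤ ξ → ξ ≤ η → η ≤ T →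
        v ξ η = v0fun n q ξ η + Vop n q v ξ η) :
    ∀ ξ ∈ Icc (0:ℝ) T,
      IntegrableOn (vEta n q v ξ) (Icc ξ T) ∧
      (∀ η ∈ Icc ξ T, v ξ η = v ξ ξ + ∫ s in ξ..η, vEta n q v ξ s) ∧
      (∀ᵐ η ∂(volume.restrict (Icc ξ T)),
        HasDerivWithinAt (fun η' => v ξ η') (vEta n q v ξ η) (Icc ξ T) η) := by
  rintro ξ ⟨hξ0, hξT⟩
  have hqIcc : IntegrableOn q (Icc 0 T) :=
    hq.integrableOn_compact_subset (fun x hx => hx.1) isCompact_Icc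
  -- 1D interval integrability of translates/dilates of q
  have hcomp : ∀ x : ℝ, 0 ≤ x → x ≤ T →
      IntervalIntegrable (fun y => q ((y - x) / 2)) volume x T := by
    intro x hx0 hxT
    have hbase : IntervalIntegrable q volume 0 ((T - x) / 2) := by
      rw [intervalIntegrable_iff, uIoc_of_le (by linarith)]
      exact hqIcc.mono_set (fun s hs => ⟨hs.1.le, hs.2.trans (by linarith)⟩)
    have step1 : IntervalIntegrable (fun y => q (y / 2)) volume 0 (T - x) := by
      have h := hbase.comp_mul_right (c := 1 / 2)
      simp only [mul_one_div, zero_div, div_div] at h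
      norm_num at h
      exact h
    have step2 := step1.comp_sub_right x
    simpa using step2
  -- compactness / boundedness of v on the triangle
  set tri : Set (ℝ × ℝ) := {p : ℝ × ℝ | 0 ≤ p.1 ∧ p.1 ≤ p.2 ∧ p.2 ≤ T} with htri
  have htri_closed : IsClosed tri := by
    have : tri = {p : ℝ × ℝ | 0 ≤ p.1} ∩ ({p | p.1 ≤ p.2} ∩ {p | p.2 ≤ T}) := rfl
    rw [this]
    exact (isClosed_le continuous_const continuous_fst).inter
      ((isClosed_le continuous_fst continuous_snd).inter
        (isClosed_le continuous_snd continuous_const))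
  have htri_cpt : IsCompact tri := by
    refine (isCompact_Icc (a := ((0:ℝ),(0:ℝ))) (b := (T,T))).of_isClosed_subset htri_closed ?_
    rintro ⟨x, y⟩ ⟨h1, h2, h3⟩
    exact ⟨⟨h1, h1.trans h2⟩, ⟨h2.trans h3, h3⟩⟩
  obtain ⟨C, hC⟩ := htri_cpt.exists_bound_of_continuousOn hcont
  have hC0 : 0 ≤ C := le_trans (norm_nonneg _) (hC (0, 0) ⟨le_rfl, le_rfl, hT.le⟩)
  -- the rectangle
  set R₁ : Set ℝ := Ioc (0:ℝ) ξ with hR₁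
  set R₂ : Set ℝ := Ioc ξ T with hR₂
  set μp : Measure (ℝ × ℝ) := (volume.restrict R₁).prod (volume.restrict R₂) with hμp
  have hmμ : μp = (volume : Measure (ℝ × ℝ)).restrict (R₁ ×ˢ R₂) := by
    rw [hμp, Measure.volume_eq_prod, Measure.prod_restrict]
  have hRmeas : MeasurableSet (R₁ ×ˢ R₂) := measurableSet_Ioc.prod measurableSet_Ioc
  have hRsub : R₁ ×ˢ R₂ ⊆ tri := by
    rintro ⟨x, y⟩ ⟨hx, hy⟩
    exact ⟨hx.1.le, hx.2.trans hy.1.le, hy.2⟩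
  -- measurability of the integrand on the rectangle
  have hm : Measurable fun p : ℝ × ℝ => (p.2 - p.1) / 2 :=
    (measurable_snd.sub measurable_fst).div_const 2
  have hq_aesm : AEStronglyMeasurable q (volume.restrict (Icc 0 T)) :=
    hqIcc.aestronglyMeasurable
  have hsm' : AEStronglyMeasurable (fun p : ℝ × ℝ => q ((p.2 - p.1) / 2)) μp := by
    refine ((hq_aesm.stronglyMeasurable_mk.comp_measurable hm).aestronglyMeasurable).congr ?_
    have hN : volume ({s : ℝ | hq_aesm.mk q s ≠ q s} ∩ Icc 0 T) = 0 := by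
      have h := hq_aesm.ae_eq_mk
      rw [EventuallyEq, ae_iff, Measure.restrict_apply' measurableSet_Icc] at h
      refine le_antisymm (le_trans (measure_mono ?_) h.le) zero_le
      intro s hs
      exact ⟨fun hc => hs.1 hc.symm, hs.2⟩
    have h2 := null_pre _ hN
    rw [hmμ, EventuallyEq, ae_iff, Measure.restrict_apply' hRmeas]
    refine le_antisymm (le_trans (measure_mono ?_) h2.le) zero_le
    rintro ⟨x, y⟩ ⟨hne, hx, hy⟩
    refine ⟨hne, ?_, ?_⟩
    · simp only
      have := hx.2.trans hy.1.le
      linarith [hx.2, hy.1]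
    · simp only
      linarith [hx.1, hy.2]
  have hv_aesm : AEStronglyMeasurable (fun p : ℝ × ℝ => v p.1 p.2) μp := by
    rw [hmμ]
    exact (hcont.mono hRsub).aestronglyMeasurable hRmeas
  have hF_aesm : AEStronglyMeasurable
      (fun p : ℝ × ℝ => q ((p.2 - p.1) / 2) * v p.1 p.2) μp := hsm'.mul hv_aesm
  -- integrability of (x,y) ↦ q ((y-x)/2) on the rectangle
  have hqm_int : Integrable (fun p : ℝ × ℝ => q ((p.2 - p.1) / 2)) μp := by
    refine (integrable_prod_iff hsm').2 ⟨?_, ?_⟩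
    · filter_upwards [ae_restrict_mem measurableSet_Ioc] with x hx
      have h1 : IntervalIntegrable (fun y => q ((y - x) / 2)) volume ξ T :=
        (hcomp x hx.1.le (hx.2.trans hξT)).mono_set
          (by rw [uIcc_of_le hξT, uIcc_of_le (hx.2.trans hξT)]
              exact Icc_subset_Icc hx.2 le_rfl)
      rw [intervalIntegrable_iff_integrableOn_Ioc_of_le hξT] at h1
      exact h1
    · refine Integrable.mono' (g := fun _ => 2 * ∫ s in Icc 0 T, ‖q s‖)
        (integrableOn_const measure_Ioc_lt_top.ne) hsm'.norm.integral_prod_right' ?_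
      filter_upwards [ae_restrict_mem measurableSet_Ioc] with x hx
      have hxξ : x ≤ ξ := hx.2
      have hnn : 0 ≤ ∫ y in R₂, ‖q ((y - x) / 2)‖ :=
        setIntegral_nonneg measurableSet_Ioc fun y _ => norm_nonneg _
      rw [Real.norm_eq_abs, abs_of_nonneg hnn]
      have e1 : (∫ y in R₂, ‖q ((y - x) / 2)‖)
          = ∫ y in ξ..T, ‖q ((y - x) / 2)‖ := by
        rw [intervalIntegral.integral_of_le hξT]
      have e2 : (∫ y in ξ..T, ‖q ((y - x) / 2)‖)
          = ∫ y in (ξ - x)..(T - x), ‖q (y / 2)‖ := by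
        simpa using intervalIntegral.integral_comp_sub_right (fun y => ‖q (y / 2)‖) x
      have e3 : (∫ y in (ξ - x)..(T - x), ‖q (y / 2)‖)
          = (2:ℝ) • ∫ y in ((ξ - x) / 2)..((T - x) / 2), ‖q y‖ :=
        intervalIntegral.integral_comp_div (fun y => ‖q y‖) (by norm_num)
      have e4 : (∫ y in ((ξ - x) / 2)..((T - x) / 2), ‖q y‖) ≤ ∫ s in Icc 0 T, ‖q s‖ := by
        rw [intervalIntegral.integral_of_le (by linarith : (ξ - x) / 2 ≤ (T - x) / 2)]
        refine setIntegral_mono_set hqIcc.norm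
          (Eventually.of_forall fun s => norm_nonneg _)
          (HasSubset.Subset.eventuallyLE ?_)
        intro s hs
        simp only [mem_Ioc] at hs
        have hx0 : 0 ≤ x := hx.1.le
        constructor
        · have : (0:ℝ) ≤ (ξ - x) / 2 := by linarith
          linarith [hs.1]
        · have : (T - x) / 2 ≤ T := by linarith
          linarith [hs.2]
      rw [e1, e2, e3, smul_eq_mul]
      linarith [e4]
  -- integrability of the full integrand on the rectangle
  have hF_int : Integrable (fun p : ℝ × ℝ => q ((p.2 - p.1) / 2) * v p.1 p.2) μp := by
    refine Integrable.mono' (hqm_int.norm.const_mul C) hF_aesm ?_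
    rw [hmμ]
    filter_upwards [ae_restrict_mem hRmeas] with p hp
    calc ‖q ((p.2 - p.1) / 2) * v p.1 p.2‖
        ≤ ‖q ((p.2 - p.1) / 2)‖ * ‖v p.1 p.2‖ := norm_mul_le _ _
      _ ≤ ‖q ((p.2 - p.1) / 2)‖ * C := by
          exact mul_le_mul_of_nonneg_left (hC _ (hRsub hp)) (norm_nonneg _)
      _ = C * ‖q ((p.2 - p.1) / 2)‖ := mul_comm _ _
  -- marginal integrability of the inner integral
  have hw_margin : Integrable
      (fun y => ∫ x, q ((y - x) / 2) * v x y ∂(volume.restrict R₁))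
      (volume.restrict R₂) := hF_int.integral_prod_right
  have hw_int : IntegrableOn (fun y => ∫ x in (0:ℝ)..ξ, q ((y - x) / 2) * v x y) R₂ := by
    refine hw_margin.congr (Eventually.of_forall fun y => ?_)
    simp only
    rw [intervalIntegral.integral_of_le hξ0]
  -- Fubini
  have hswap : ∀ η, ξ ≤ η → η ≤ T →
      (∫ x in (0:ℝ)..ξ, ∫ y in ξ..η, q ((y - x) / 2) * v x y)
        = ∫ y in ξ..η, ∫ x in (0:ℝ)..ξ, q ((y - x) / 2) * v x y := by
    intro η hξη hηT
    have hsmall : Integrable (fun p : ℝ × ℝ => q ((p.2 - p.1) / 2) * v p.1 p.2)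
        ((volume.restrict R₁).prod (volume.restrict (Ioc ξ η))) := by
      refine hF_int.mono_measure ?_
      rw [Measure.prod_restrict, hmμ]
      exact Measure.restrict_mono
        (prod_mono Subset.rfl (Ioc_subset_Ioc_right hηT)) le_rfl
    have h1 : ∀ x : ℝ, (∫ y in ξ..η, q ((y - x) / 2) * v x y)
        = ∫ y in Ioc ξ η, q ((y - x) / 2) * v x y :=
      fun x => intervalIntegral.integral_of_le hξη
    have h2 : ∀ y : ℝ, (∫ x in (0:ℝ)..ξ, q ((y - x) / 2) * v x y)
        = ∫ x in Ioc 0 ξ, q ((y - x) / 2) * v x y :=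
      fun y => intervalIntegral.integral_of_le hξ0
    rw [intervalIntegral.integral_of_le hξ0, intervalIntegral.integral_of_le hξη]
    simp_rw [h1, h2]
    exact integral_integral_swap hsmall
  -- change of variables for v₀
  have hv0 : ∀ η : ℝ, (∫ s in ξ..η, (-((1/4 : ℂ) • q (s / 2)))) = v0fun n q ξ η := by
    intro η
    rw [intervalIntegral.integral_neg, intervalIntegral.integral_smul,
      intervalIntegral.integral_comp_div (f := q) (by norm_num : (2:ℝ) ≠ 0), v0fun]
    rw [← Complex.coe_smul, smul_smul]
    norm_num
  -- interval integrability of s ↦ q (s/2)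
  have hq2 : IntervalIntegrable (fun s => q (s / 2)) volume ξ T := by
    have h := hcomp 0 le_rfl hT.le
    simp only [sub_zero] at h
    exact h.mono_set
      (by rw [uIcc_of_le hξT, uIcc_of_le hT.le]; exact Icc_subset_Icc hξ0 le_rfl)
  have hvxx : v ξ ξ = 0 := by
    rw [heq ξ ξ hξ0 le_rfl hξT]
    have h1 : v0fun n q ξ ξ = 0 := by
      rw [v0fun, intervalIntegral.integral_same, smul_zero (M := ℂ) (A := MatC n), neg_zero]
    have h2 : Vop n q v ξ ξ = 0 := by
      show -((1 / 4 : ℂ) • ∫ ξ₁ in (0:ℝ)..ξ, ∫ η₁ in ξ..ξ, q ((η₁ - ξ₁) / 2) * v ξ₁ η₁) = 0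
      simp only [intervalIntegral.integral_same]
      rw [intervalIntegral.integral_zero, smul_zero (M := ℂ) (A := MatC n), neg_zero]
    rw [h1, h2, add_zero]
  -- key identity
  have hkey : ∀ η ∈ Icc ξ T, v ξ η = v ξ ξ + ∫ s in ξ..η, vEta n q v ξ s := by
    rintro η ⟨hξη, hηT⟩
    have hmono : IntervalIntegrable (fun s => q (s / 2)) volume ξ η := by
      refine hq2.mono_set ?_
      rw [uIcc_of_le hξη, uIcc_of_le hξT]
      exact Icc_subset_Icc le_rfl hηT
    have i1 : IntervalIntegrable (fun s => -((1/4 : ℂ) • q (s / 2))) volume ξ η :=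
      (hmono.smul (1/4 : ℂ)).neg
    have i2 : IntervalIntegrable
        (fun s => (1/4 : ℂ) • ∫ x in (0:ℝ)..ξ, q ((s - x) / 2) * v x s) volume ξ η := by
      rw [intervalIntegrable_iff_integrableOn_Ioc_of_le hξη]
      exact (hw_int.mono_set (Ioc_subset_Ioc_right hηT)).smul (1/4 : ℂ)
    have hsplit : (∫ s in ξ..η, vEta n q v ξ s)
        = (∫ s in ξ..η, -((1/4 : ℂ) • q (s / 2)))
          - ∫ s in ξ..η, (1/4 : ℂ) • ∫ x in (0:ℝ)..ξ, q ((s - x) / 2) * v x s := by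
      rw [← intervalIntegral.integral_sub i1 i2]
      rfl
    have hB : (∫ s in ξ..η, (1/4 : ℂ) • ∫ x in (0:ℝ)..ξ, q ((s - x) / 2) * v x s)
        = (1/4 : ℂ) • ∫ x in (0:ℝ)..ξ, ∫ y in ξ..η, q ((y - x) / 2) * v x y := by
      rw [intervalIntegral.integral_smul, hswap η hξη hηT]
    rw [heq ξ η hξ0 hξη hηT, hvxx, zero_add, hsplit, hB, hv0 η, sub_eq_add_neg]
    rfl
  -- integrability of vEta on [ξ, T]
  have hInt : IntegrableOn (vEta n q v ξ) (Icc ξ T) := by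
    rw [integrableOn_Icc_iff_integrableOn_Ioc (f := vEta n q v ξ)]
    have j1 : IntegrableOn (fun s => -((1/4 : ℂ) • q (s / 2))) (Ioc ξ T) := by
      refine (intervalIntegrable_iff_integrableOn_Ioc_of_le hξT
        (f := fun s => -((1/4 : ℂ) • q (s / 2))) (μ := volume)).1 ?_
      exact (hq2.smul (1/4 : ℂ)).neg
    have j2 : IntegrableOn
        (fun s => (1/4 : ℂ) • ∫ x in (0:ℝ)..ξ, q ((s - x) / 2) * v x s) (Ioc ξ T) :=
      hw_int.smul (1/4 : ℂ)
    exact j1.sub j2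
  refine ⟨hInt, hkey, ?_⟩
  filter_upwards [ae_hasDerivWithinAt_intervalIntegral (vEta n q v ξ) ξ T hInt,
    ae_restrict_mem measurableSet_Icc] with η hd hη
  exact (hd.const_add (v ξ ξ)).congr (fun y hy => hkey y hy) (hkey η hη)
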